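/- arXiv:1306.3831 — 2 statements merged into one kernel-verified Lean document; each statement's English description precedes it below -/
import Mathlib

section
/- Let α ∈ (0,1), ε ∈ (0,1) and K_ε(x) = x/max(|x|,ε)^{α+1} on ℝ². Then for every x with |x| ≠ ε, K_ε is differentiable at x with div K_ε(x) = (1−α)/|x|^{α+1} if |x| > ε and div K_ε(x) = 2/ε^{α+1} if |x| < ε; in particular, div K_ε(x) ≤ 2/|x|^{α+1} for every x ≠ 0 with |x| ≠ ε. -/
noncomputable section

open RealInnerProductSpace

/-- For `α, ε ∈ (0,1)` and `K_ε(x) = x / max(‖x‖,ε)^(α+1)` on `ℝ²`: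
for every `x` with `‖x‖ ≠ ε`, `K_ε` is differentiable at `x` and its divergence equals
`(1−α)/‖x‖^(α+1)` if `‖x‖ > ε` and `2/ε^(α+1)` if `‖x‖ < ε`; in particular
`div K_ε(x) ≤ 2/‖x‖^(α+1)` for every `x ≠ 0` with `‖x‖ ≠ ε`. -/
theorem regularized_kernel_div (α ε : ℝ) (hα : α ∈ Set.Ioo (0 : ℝ) 1)
    (hε : ε ∈ Set.Ioo (0 : ℝ) 1)
    (Kε : EuclideanSpace ℝ (Fin 2) → EuclideanSpace ℝ (Fin 2))
    (hKε : ∀ x : EuclideanSpace ℝ (Fin 2), Kε x = (1 / (max ‖x‖ ε) ^ (α + 1)) • x) :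
    (∀ x : EuclideanSpace ℝ (Fin 2), ‖x‖ ≠ ε →
      DifferentiableAt ℝ Kε x ∧
      (ε < ‖x‖ →
        ∑ i : Fin 2, fderiv ℝ Kε x (EuclideanSpace.single i 1) i = (1 - α) / ‖x‖ ^ (α + 1)) ∧
      (‖x‖ < ε →
        ∑ i : Fin 2, fderiv ℝ Kε x (EuclideanSpace.single i 1) i = 2 / ε ^ (α + 1))) ∧
    (∀ x : EuclideanSpace ℝ (Fin 2), x ≠ 0 → ‖x‖ ≠ ε →
      ∑ i : Fin 2, fderiv ℝ Kε x (EuclideanSpace.single i 1) i ≤ 2 / ‖x‖ ^ (α + 1)) := by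
  obtain ⟨hα0, hα1⟩ := hα
  obtain ⟨hε0, hε1⟩ := hε
  have key : ∀ x : EuclideanSpace ℝ (Fin 2), ‖x‖ ≠ ε →
      DifferentiableAt ℝ Kε x ∧
      (ε < ‖x‖ →
        ∑ i : Fin 2, fderiv ℝ Kε x (EuclideanSpace.single i 1) i = (1 - α) / ‖x‖ ^ (α + 1)) ∧
      (‖x‖ < ε →
        ∑ i : Fin 2, fderiv ℝ Kε x (EuclideanSpace.single i 1) i = 2 / ε ^ (α + 1)) := by
    intro x hx
    rcases lt_or_gt_of_ne hx with hlt | hgt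
    · -- ‖x‖ < ε : locally Kε y = (1/ε^(α+1)) • y
      have heq : Kε =ᶠ[nhds x] fun y => (1 / ε ^ (α + 1)) • y := by
        have hev : ∀ᶠ y in nhds x, ‖y‖ < ε :=
          ContinuousAt.eventually_lt continuous_norm.continuousAt continuousAt_const hlt
        filter_upwards [hev] with y hy
        rw [hKε, max_eq_right hy.le]
      have hF : HasFDerivAt (fun y : EuclideanSpace ℝ (Fin 2) => (1 / ε ^ (α + 1)) • y)
          ((1 / ε ^ (α + 1)) • ContinuousLinearMap.id ℝ (EuclideanSpace ℝ (Fin 2))) x :=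
        by exact (hasFDerivAt_id (𝕜 := ℝ) x).const_smul (1 / ε ^ (α + 1))
      have hK := hF.congr_of_eventuallyEq heq
      refine ⟨hK.differentiableAt, fun h => absurd h (by linarith), fun _ => ?_⟩
      rw [hK.fderiv]
      simp [Fin.sum_univ_two, EuclideanSpace.single_apply]
      ring
    · -- ε < ‖x‖
      have hxnorm : (0:ℝ) < ‖x‖ := lt_trans hε0 hgt
      have c2 : ((2:ℕ):ℝ) = (2:ℝ) := by norm_num
      set p : ℝ := -(α + 1) / 2 with hp
      have hip : (⟪x, x⟫ : ℝ) = ‖x‖ ^ 2 := real_inner_self_eq_norm_sq x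
      have hipos : (0:ℝ) < ⟪x, x⟫ := by rw [hip]; positivity
      have hinner : HasFDerivAt (fun y : EuclideanSpace ℝ (Fin 2) => (⟪y, y⟫ : ℝ))
          ((fderivInnerCLM ℝ (x, x)).comp ((ContinuousLinearMap.id ℝ _).prod
            (ContinuousLinearMap.id ℝ _))) x :=
        (hasFDerivAt_id x).inner ℝ (hasFDerivAt_id x)
      have hg : HasFDerivAt (fun y : EuclideanSpace ℝ (Fin 2) => ((⟪y, y⟫ : ℝ) ^ p))
          ((p * (⟪x, x⟫ : ℝ) ^ (p - 1)) • ((fderivInnerCLM ℝ (x, x)).comp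
            ((ContinuousLinearMap.id ℝ _).prod (ContinuousLinearMap.id ℝ _)))) x :=
        hinner.rpow_const (Or.inl (ne_of_gt hipos))
      have hF := hg.smul (hasFDerivAt_id x)
      have hcoef : ∀ y : EuclideanSpace ℝ (Fin 2), ε < ‖y‖ →
          1 / ‖y‖ ^ (α + 1) = (⟪y, y⟫ : ℝ) ^ p := by
        intro y hy
        have hy0 : (0:ℝ) < ‖y‖ := lt_trans hε0 hy
        rw [real_inner_self_eq_norm_sq, ← Real.rpow_natCast ‖y‖ 2, c2,
          ← Real.rpow_mul hy0.le, one_div, ← Real.rpow_neg hy0.le, hp,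
          show (2:ℝ) * (-(α + 1) / 2) = -(α + 1) from by ring]
      have heq : Kε =ᶠ[nhds x] fun y => ((⟪y, y⟫ : ℝ) ^ p) • y := by
        have hev : ∀ᶠ y in nhds x, ε < ‖y‖ :=
          ContinuousAt.eventually_lt continuousAt_const continuous_norm.continuousAt hgt
        filter_upwards [hev] with y hy
        rw [hKε, max_eq_left hy.le, hcoef y hy]
      have hK := hF.congr_of_eventuallyEq heq
      refine ⟨hK.differentiableAt, fun _ => ?_, fun h => absurd h (by linarith)⟩
      rw [hK.fderiv]
      have hx0 : x 0 * x 0 + x 1 * x 1 = ‖x‖ ^ 2 := by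
        rw [EuclideanSpace.real_norm_sq_eq]
        simp [Fin.sum_univ_two, sq]
      have h1 : (⟪EuclideanSpace.single (0:Fin 2) (1:ℝ), x⟫ : ℝ) = x 0 := by
        rw [real_inner_comm, EuclideanSpace.inner_single_right]; simp
      have h2 : (⟪EuclideanSpace.single (1:Fin 2) (1:ℝ), x⟫ : ℝ) = x 1 := by
        rw [real_inner_comm, EuclideanSpace.inner_single_right]; simp
      have e1 : ((‖x‖:ℝ) ^ 2) ^ p = ‖x‖ ^ (2 * p) := by
        rw [← Real.rpow_natCast ‖x‖ 2, c2, ← Real.rpow_mul hxnorm.le]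
      have e2 : ((‖x‖:ℝ) ^ 2) ^ (p - 1) = ‖x‖ ^ (2 * p - 2) := by
        rw [← Real.rpow_natCast ‖x‖ 2, c2, ← Real.rpow_mul hxnorm.le,
          show (2:ℝ) * (p - 1) = 2 * p - 2 from by ring]
      have hmul : ‖x‖ ^ (2 * p - 2) * ‖x‖ ^ 2 = ‖x‖ ^ (2 * p) := by
        rw [← Real.rpow_natCast ‖x‖ 2, c2, ← Real.rpow_add hxnorm,
          show 2 * p - 2 + (2:ℝ) = 2 * p from by ring]
      have hrhs : (1 - α) / ‖x‖ ^ (α + 1) = (2 + 2 * p) * ‖x‖ ^ (2 * p) := by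
        rw [show (2:ℝ) * p = -(α + 1) from by rw [hp]; ring,
          Real.rpow_neg hxnorm.le, div_eq_mul_inv]
        ring
      simp only [ContinuousLinearMap.add_apply, ContinuousLinearMap.smul_apply,
        ContinuousLinearMap.smulRight_apply, ContinuousLinearMap.coe_comp',
        Function.comp_apply, ContinuousLinearMap.prod_apply, ContinuousLinearMap.id_apply,
        fderivInnerCLM_apply, EuclideanSpace.inner_single_right, PiLp.add_apply,
        PiLp.smul_apply, smul_eq_mul, Fin.sum_univ_two, h1, h2, hip,
        EuclideanSpace.single_apply, id_eq, map_one, mul_one, starRingEnd_apply, star_trivial]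
      rw [e1, e2, hrhs]
      simp only [Fin.one_eq_zero_iff, Fin.zero_eq_one_iff, Nat.succ_ne_self, if_false,
        if_true, Nat.reduceEqDiff, reduceIte]
      linear_combination (2 * p * ‖x‖ ^ (2 * p - 2)) * hx0 + (2 * p) * hmul
  refine ⟨key, fun x hx0 hxε => ?_⟩
  have hxpos : (0:ℝ) < ‖x‖ := norm_pos_iff.mpr hx0
  obtain ⟨_, hbig, hsmall⟩ := key x hxε
  rcases lt_or_gt_of_ne hxε with hlt | hgt
  · rw [hsmall hlt]
    have h1 : ‖x‖ ^ (α + 1) ≤ ε ^ (α + 1) :=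
      Real.rpow_le_rpow hxpos.le hlt.le (by linarith)
    have h2 : (0:ℝ) < ‖x‖ ^ (α + 1) := Real.rpow_pos_of_pos hxpos _
    exact div_le_div_of_nonneg_left (by norm_num) h2 h1
  · rw [hbig hgt]
    have h2 : (0:ℝ) < ‖x‖ ^ (α + 1) := Real.rpow_pos_of_pos hxpos _
    exact div_le_div₀ (by norm_num) (by linarith) h2 le_rfl
end
end

section
/- Let f be a weakly differentiable probability density on ℝ² with finite Fisher information I(f) = ∫_{ℝ²} |∇f|²/f dx. Then: (a) for every p ∈ [1,∞) there is a constant C_p (independent of f) with ‖f‖_{L^p(ℝ²)} ≤ C_p I(f)^{1−1/p}; (b) for every q ∈ [1,2) there is a constant C_q (independent of f) with ‖∇f‖_{L^q(ℝ²)} ≤ C_q I(f)^{3/2−1/q}. -/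
noncomputable section

open MeasureTheory

lemma oneD {h h' : ℝ → ℝ} (hd : ∀ t, HasDerivAt h (h' t) t)
    (h0 : ∀ t, 0 ≤ h t) (hint : Integrable h) (hint' : Integrable h') (x : ℝ) :
    h x ≤ ∫ t, |h' t| := by
  refine le_of_forall_pos_le_add fun ε hε => ?_
  obtain ⟨a, hax, ha⟩ : ∃ a, a ≤ x ∧ h a < ε := by
    by_contra hc
    push_neg at hc
    have hb : ∫⁻ t in Set.Iic x, ENNReal.ofReal ε ≤ ∫⁻ t in Set.Iic x, (‖h t‖₊ : ENNReal) := by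
      have hcont : Continuous h := continuous_iff_continuousAt.mpr fun t => (hd t).continuousAt
      refine setLIntegral_mono (hcont.measurable.nnnorm.coe_nnreal_ennreal) fun t ht => ?_
      rw [← enorm_eq_nnnorm, Real.enorm_eq_ofReal (h0 t)]
      exact ENNReal.ofReal_le_ofReal (hc t ht)
    rw [setLIntegral_const, Real.volume_Iic,
      ENNReal.mul_top (by simp [ENNReal.ofReal_eq_zero]; linarith)] at hb
    have hlt : ∫⁻ t in Set.Iic x, (‖h t‖₊ : ENNReal) < ⊤ :=
      lt_of_le_of_lt (setLIntegral_le_lintegral _ _) hint.2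
    exact absurd (top_le_iff.mp hb) hlt.ne
  have hFTC : ∫ t in a..x, h' t = h x - h a :=
    intervalIntegral.integral_eq_sub_of_hasDerivAt (fun t _ => hd t)
      hint'.intervalIntegrable
  have h1 : h x - h a ≤ |∫ t in a..x, h' t| := by
    rw [hFTC]; exact le_abs_self _
  have h2 : |∫ t in a..x, h' t| ≤ ∫ t in a..x, |h' t| :=
    intervalIntegral.abs_integral_le_integral_abs hax
  have h3 : ∫ t in a..x, |h' t| ≤ ∫ t, |h' t| := by
    rw [intervalIntegral.integral_of_le hax]
    exact setIntegral_le_integral hint'.abs (Filter.Eventually.of_forall fun t => abs_nonneg _)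
  linarith

lemma ae_snd_prod {α β : Type*} [MeasurableSpace α] [MeasurableSpace β]
    (μ : Measure α) (ν : Measure β) [SFinite ν] {Q : β → Prop} (hq : ∀ᵐ y ∂ν, Q y) :
    ∀ᵐ z ∂μ.prod ν, Q z.2 := by
  rw [Filter.eventually_iff, mem_ae_iff] at hq ⊢
  obtain ⟨S, hSsub, hSmeas, hSnull⟩ := exists_measurable_superset_of_null hq
  have h1 : {z : α × β | Q z.2}ᶜ ⊆ Set.univ ×ˢ S := fun z hz =>
    Set.mem_prod.mpr ⟨Set.mem_univ _, hSsub hz⟩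
  have h2 : μ.prod ν (Set.univ ×ˢ S) = 0 := by
    rw [Measure.prod_prod, hSnull, mul_zero]
  exact measure_mono_null h1 h2

lemma ae_fst_prod {α β : Type*} [MeasurableSpace α] [MeasurableSpace β]
    (μ : Measure α) (ν : Measure β) [SFinite ν] {Q : α → Prop} (hq : ∀ᵐ x ∂μ, Q x) :
    ∀ᵐ z ∂μ.prod ν, Q z.1 := by
  rw [Filter.eventually_iff, mem_ae_iff] at hq ⊢
  obtain ⟨S, hSsub, hSmeas, hSnull⟩ := exists_measurable_superset_of_null hq
  have h1 : {z : α × β | Q z.1}ᶜ ⊆ S ×ˢ Set.univ := fun z hz =>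
    Set.mem_prod.mpr ⟨hSsub hz, Set.mem_univ _⟩
  have h2 : μ.prod ν (S ×ˢ Set.univ) = 0 := by
    rw [Measure.prod_prod, hSnull, zero_mul]
  exact measure_mono_null h1 h2

lemma prodLemma {G : ℝ × ℝ → ℝ} (hG : Differentiable ℝ G) (h0 : ∀ z, 0 ≤ G z)
    (hint : Integrable G)
    (hi1 : Integrable (fun z => fderiv ℝ G z (1, 0)))
    (hi2 : Integrable (fun z => fderiv ℝ G z (0, 1))) :
    ∫⁻ z, ENNReal.ofReal (G z) ^ (2 : ℕ) ≤
      (∫⁻ z, ENNReal.ofReal |fderiv ℝ G z (1, 0)|) *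
        (∫⁻ z, ENNReal.ofReal |fderiv ℝ G z (0, 1)|) := by
  have hvol : (volume : Measure (ℝ × ℝ)) = (volume : Measure ℝ).prod volume :=
    MeasureTheory.Measure.volume_eq_prod ℝ ℝ
  set D1 : ℝ × ℝ → ℝ := fun z => fderiv ℝ G z (1, 0) with hD1
  set D2 : ℝ × ℝ → ℝ := fun z => fderiv ℝ G z (0, 1) with hD2
  have hmD1 : Measurable D1 := measurable_fderiv_apply_const ℝ G (1, 0)
  have hmD2 : Measurable D2 := measurable_fderiv_apply_const ℝ G (0, 1)
  have hF1 : Measurable fun z => ENNReal.ofReal |D1 z| :=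
    ENNReal.measurable_ofReal.comp hmD1.abs
  have hF2 : Measurable fun z => ENNReal.ofReal |D2 z| :=
    ENNReal.measurable_ofReal.comp hmD2.abs
  have hslice1 : ∀ y t, HasDerivAt (fun t => G (t, y)) (D1 (t, y)) t := by
    intro y t
    have h1 : HasDerivAt (fun t : ℝ => (t, y)) (1, 0) t := by
      simpa using (hasDerivAt_id t).prodMk (hasDerivAt_const t y)
    exact (hG (t, y)).hasFDerivAt.comp_hasDerivAt t h1
  have hslice2 : ∀ x s, HasDerivAt (fun s => G (x, s)) (D2 (x, s)) s := by
    intro x s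
    have h1 : HasDerivAt (fun s : ℝ => (x, s)) (0, 1) s := by
      simpa using (hasDerivAt_const s x).prodMk (hasDerivAt_id s)
    exact (hG (x, s)).hasFDerivAt.comp_hasDerivAt s h1
  set A : ℝ → ENNReal := fun y => ∫⁻ t, ENNReal.ofReal |D1 (t, y)| with hA
  set B : ℝ → ENNReal := fun x => ∫⁻ s, ENNReal.ofReal |D2 (x, s)| with hB
  have hmA : Measurable A := Measurable.lintegral_prod_left (f := fun t y => ENNReal.ofReal |D1 (t, y)|) hF1
  have hmB : Measurable B := Measurable.lintegral_prod_right (f := fun x s => ENNReal.ofReal |D2 (x, s)|) hF2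
  rw [hvol] at hint hi1 hi2 ⊢
  have haeA : ∀ᵐ z ∂(volume : Measure ℝ).prod volume, ENNReal.ofReal (G z) ≤ A z.2 := by
    have hae : ∀ᵐ y : ℝ, ∀ x : ℝ, ENNReal.ofReal (G (x, y)) ≤ A y := by
      filter_upwards [hint.prod_left_ae, hi1.prod_left_ae] with y hGy hDy x
      have h1 : G (x, y) ≤ ∫ t, |D1 (t, y)| :=
        oneD (hslice1 y) (fun t => h0 _) hGy hDy x
      have h2 : ENNReal.ofReal (∫ t, |D1 (t, y)|) = A y :=
        ofReal_integral_eq_lintegral_ofReal hDy.abs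
          (Filter.Eventually.of_forall fun t => abs_nonneg _)
      exact h2 ▸ ENNReal.ofReal_le_ofReal h1
    filter_upwards [ae_snd_prod volume volume hae] with z hz using hz z.1
  have haeB : ∀ᵐ z ∂(volume : Measure ℝ).prod volume, ENNReal.ofReal (G z) ≤ B z.1 := by
    have hae : ∀ᵐ x : ℝ, ∀ y : ℝ, ENNReal.ofReal (G (x, y)) ≤ B x := by
      filter_upwards [hint.prod_right_ae, hi2.prod_right_ae] with x hGx hDx y
      have h1 : G (x, y) ≤ ∫ s, |D2 (x, s)| :=
        oneD (hslice2 x) (fun s => h0 _) hGx hDx y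
      have h2 : ENNReal.ofReal (∫ s, |D2 (x, s)|) = B x :=
        ofReal_integral_eq_lintegral_ofReal hDx.abs
          (Filter.Eventually.of_forall fun s => abs_nonneg _)
      exact h2 ▸ ENNReal.ofReal_le_ofReal h1
    filter_upwards [ae_fst_prod volume volume hae] with z hz using hz z.2
  calc ∫⁻ z, ENNReal.ofReal (G z) ^ (2 : ℕ) ∂(volume : Measure ℝ).prod volume
      ≤ ∫⁻ z, B z.1 * A z.2 ∂(volume : Measure ℝ).prod volume := by
        refine lintegral_mono_ae ?_
        filter_upwards [haeA, haeB] with z h1 h2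
        rw [pow_two]
        exact mul_le_mul' h2 h1
    _ = (∫⁻ x, B x) * (∫⁻ y, A y) :=
        lintegral_prod_mul hmB.aemeasurable hmA.aemeasurable
    _ = (∫⁻ z, ENNReal.ofReal |D2 z| ∂(volume : Measure ℝ).prod volume) *
          (∫⁻ z, ENNReal.ofReal |D1 z| ∂(volume : Measure ℝ).prod volume) := by
        rw [lintegral_prod _ hF2.aemeasurable, lintegral_prod_symm _ hF1.aemeasurable]
    _ = _ := mul_comm _ _

abbrev E2 := EuclideanSpace ℝ (Fin 2)

noncomputable def Lmap : (ℝ × ℝ) ≃L[ℝ] E2 :=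
  (ContinuousLinearEquiv.finTwoArrow ℝ ℝ).symm.trans
    (EuclideanSpace.equiv (Fin 2) ℝ).symm

lemma psi_measurePreserving : MeasurePreserving (⇑Lmap) volume volume := by
  have h1 : MeasurePreserving (⇑(MeasurableEquiv.finTwoArrow (α := ℝ)).symm)
      volume volume := (volume_preserving_finTwoArrow ℝ).symm _
  have h2 : MeasurePreserving (⇑(MeasurableEquiv.toLp 2 (Fin 2 → ℝ)))
      volume volume := (EuclideanSpace.volume_preserving_symm_measurableEquiv_toLp (Fin 2)).symm _
  have heq : ⇑Lmap = (⇑(MeasurableEquiv.toLp 2 (Fin 2 → ℝ))) ∘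
      (⇑(MeasurableEquiv.finTwoArrow (α := ℝ)).symm) := by
    funext z; rfl
  rw [heq]
  exact h2.comp h1

example : ‖Lmap (1, 0)‖ = 1 := by
  have : Lmap (1, 0) = EuclideanSpace.single (0 : Fin 2) (1 : ℝ) := by
    ext i; fin_cases i <;> simp [Lmap]
  rw [this, EuclideanSpace.norm_single]; norm_num

example : ‖Lmap (0, 1)‖ = 1 := by
  have : Lmap (0, 1) = EuclideanSpace.single (1 : Fin 2) (1 : ℝ) := by
    ext i; fin_cases i <;> simp [Lmap]
  rw [this, EuclideanSpace.norm_single]; norm_num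

lemma claimA {g : E2 → ℝ} (hg : Differentiable ℝ g) (h0 : ∀ x, 0 ≤ g x)
    (hint : Integrable g) (hD : Integrable (fun x => ‖fderiv ℝ g x‖)) :
    ∫⁻ x, ENNReal.ofReal (g x) ^ (2 : ℕ) ≤
      (∫⁻ x, ENNReal.ofReal ‖fderiv ℝ g x‖) ^ (2 : ℕ) := by
  have hψ := psi_measurePreserving
  have hemb : MeasurableEmbedding (⇑Lmap) :=
    (Lmap.toHomeomorph.toMeasurableEquiv).measurableEmbedding
  set G : ℝ × ℝ → ℝ := fun z => g (Lmap z) with hGdef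
  have hGdiff : Differentiable ℝ G := hg.comp Lmap.differentiable
  have hG0 : ∀ z, 0 ≤ G z := fun z => h0 _
  have hmg : Measurable g := hg.continuous.measurable
  have hmfg : Measurable fun x => ‖fderiv ℝ g x‖ := (measurable_fderiv ℝ g).norm
  have hGint : Integrable G := by
    rw [hGdef]
    exact (hψ.integrable_comp_emb hemb).mpr hint
  have hfderivG : ∀ z, fderiv ℝ G z =
      (fderiv ℝ g (Lmap z)).comp (Lmap : (ℝ × ℝ) →L[ℝ] E2) := by
    intro z
    exact ((hg (Lmap z)).hasFDerivAt.comp z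
      (Lmap.toContinuousLinearMap.hasFDerivAt)).fderiv
  have hnorm1 : ‖Lmap (1, 0)‖ = 1 := by
    have h : Lmap (1, 0) = EuclideanSpace.single (0 : Fin 2) (1 : ℝ) := by
      ext i; fin_cases i <;> simp [Lmap]
    rw [h, EuclideanSpace.norm_single]; norm_num
  have hnorm2 : ‖Lmap (0, 1)‖ = 1 := by
    have h : Lmap (0, 1) = EuclideanSpace.single (1 : Fin 2) (1 : ℝ) := by
      ext i; fin_cases i <;> simp [Lmap]
    rw [h, EuclideanSpace.norm_single]; norm_num
  have hbound1 : ∀ z, |fderiv ℝ G z (1, 0)| ≤ ‖fderiv ℝ g (Lmap z)‖ := by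
    intro z
    rw [hfderivG z]
    calc |fderiv ℝ g (Lmap z) (Lmap (1, 0))| ≤ ‖fderiv ℝ g (Lmap z)‖ * ‖Lmap (1, 0)‖ :=
          (fderiv ℝ g (Lmap z)).le_opNorm _
      _ = ‖fderiv ℝ g (Lmap z)‖ := by rw [hnorm1, mul_one]
  have hbound2 : ∀ z, |fderiv ℝ G z (0, 1)| ≤ ‖fderiv ℝ g (Lmap z)‖ := by
    intro z
    rw [hfderivG z]
    calc |fderiv ℝ g (Lmap z) (Lmap (0, 1))| ≤ ‖fderiv ℝ g (Lmap z)‖ * ‖Lmap (0, 1)‖ :=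
          (fderiv ℝ g (Lmap z)).le_opNorm _
      _ = ‖fderiv ℝ g (Lmap z)‖ := by rw [hnorm2, mul_one]
  have hMint : Integrable (fun z => ‖fderiv ℝ g (Lmap z)‖) :=
    (hψ.integrable_comp_emb hemb).mpr hD
  have hi1 : Integrable (fun z => fderiv ℝ G z (1, 0)) := by
    refine hMint.mono' ((measurable_fderiv_apply_const ℝ G (1, 0)).aestronglyMeasurable) ?_
    exact Filter.Eventually.of_forall fun z => by
      simpa [Real.norm_eq_abs] using hbound1 z
  have hi2 : Integrable (fun z => fderiv ℝ G z (0, 1)) := by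
    refine hMint.mono' ((measurable_fderiv_apply_const ℝ G (0, 1)).aestronglyMeasurable) ?_
    exact Filter.Eventually.of_forall fun z => by
      simpa [Real.norm_eq_abs] using hbound2 z
  have key := prodLemma hGdiff hG0 hGint hi1 hi2
  have hleft : ∫⁻ x, ENNReal.ofReal (g x) ^ (2 : ℕ) =
      ∫⁻ z, ENNReal.ofReal (G z) ^ (2 : ℕ) := by
    exact (hψ.lintegral_comp ((ENNReal.measurable_ofReal.comp hmg).pow_const 2)).symm
  have hright : ∫⁻ z, ENNReal.ofReal ‖fderiv ℝ g (Lmap z)‖ =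
      ∫⁻ x, ENNReal.ofReal ‖fderiv ℝ g x‖ :=
    hψ.lintegral_comp (ENNReal.measurable_ofReal.comp hmfg)
  have hb1 : (∫⁻ z, ENNReal.ofReal |fderiv ℝ G z (1, 0)|) ≤
      ∫⁻ x, ENNReal.ofReal ‖fderiv ℝ g x‖ := by
    rw [← hright]
    exact lintegral_mono fun z => ENNReal.ofReal_le_ofReal (hbound1 z)
  have hb2 : (∫⁻ z, ENNReal.ofReal |fderiv ℝ G z (0, 1)|) ≤
      ∫⁻ x, ENNReal.ofReal ‖fderiv ℝ g x‖ := by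
    rw [← hright]
    exact lintegral_mono fun z => ENNReal.ofReal_le_ofReal (hbound2 z)
  calc ∫⁻ x, ENNReal.ofReal (g x) ^ (2 : ℕ)
      = ∫⁻ z, ENNReal.ofReal (G z) ^ (2 : ℕ) := hleft
    _ ≤ (∫⁻ z, ENNReal.ofReal |fderiv ℝ G z (1, 0)|) *
          (∫⁻ z, ENNReal.ofReal |fderiv ℝ G z (0, 1)|) := key
    _ ≤ (∫⁻ x, ENNReal.ofReal ‖fderiv ℝ g x‖) *
          (∫⁻ x, ENNReal.ofReal ‖fderiv ℝ g x‖) := mul_le_mul' hb1 hb2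
    _ = (∫⁻ x, ENNReal.ofReal ‖fderiv ℝ g x‖) ^ (2 : ℕ) := (pow_two _).symm

noncomputable def Nf (f : E2 → ℝ) (r : ℝ) : ENNReal := ∫⁻ x, ENNReal.ofReal (f x) ^ r

lemma grad_norm (f : E2 → ℝ) (x : E2) : ‖gradient f x‖ = ‖fderiv ℝ f x‖ := by
  rw [gradient]
  exact LinearIsometryEquiv.norm_map _ _

lemma fderiv_zero_of_min {f : E2 → ℝ} (h0 : ∀ y, 0 ≤ f y) {x : E2} (hx : f x = 0) :
    fderiv ℝ f x = 0 := by
  refine IsLocalMin.fderiv_eq_zero ?_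
  exact Filter.Eventually.of_forall fun y => by rw [hx]; exact h0 y

lemma coreCS {f : E2 → ℝ} (hd : Differentiable ℝ f) (h0 : ∀ x, 0 ≤ f x)
    (hfish : Integrable (fun x => ‖gradient f x‖ ^ 2 / f x)) {s : ℝ} (hs : 1 ≤ s) :
    ∫⁻ x, ENNReal.ofReal (f x ^ (s - 1) * ‖fderiv ℝ f x‖) ≤
      Nf f (2 * s - 1) ^ (1 / 2 : ℝ) *
        ENNReal.ofReal (∫ x, ‖gradient f x‖ ^ 2 / f x) ^ (1 / 2 : ℝ) := by
  have hmf : Measurable f := hd.continuous.measurable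
  have hmD : Measurable fun x => ‖fderiv ℝ f x‖ := (measurable_fderiv ℝ f).norm
  have hgeq : (fun x => ‖gradient f x‖ ^ 2 / f x) = fun x => ‖fderiv ℝ f x‖ ^ 2 / f x := by
    funext x; rw [grad_norm]
  have hfish' : Integrable (fun x => ‖fderiv ℝ f x‖ ^ 2 / f x) := hgeq ▸ hfish
  set a : E2 → ENNReal := fun x => ENNReal.ofReal (f x) ^ (s - 1/2 : ℝ) with ha
  set b : E2 → ENNReal := fun x => ENNReal.ofReal (Real.sqrt (‖fderiv ℝ f x‖ ^ 2 / f x)) with hb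
  have hma : Measurable a := (ENNReal.measurable_ofReal.comp hmf).pow_const _
  have hmb : Measurable b :=
    ENNReal.measurable_ofReal.comp (Real.continuous_sqrt.measurable.comp
      ((hmD.pow_const 2).div hmf))
  have pw : ∀ x, ENNReal.ofReal (f x ^ (s - 1) * ‖fderiv ℝ f x‖) ≤ (a * b) x := by
    intro x
    rcases eq_or_lt_of_le (h0 x) with hfx | hfx
    · have hD0 : fderiv ℝ f x = 0 := fderiv_zero_of_min h0 hfx.symm
      simp [hD0]
    · have hfx' : f x ≠ 0 := ne_of_gt hfx
      have hsq : Real.sqrt (‖fderiv ℝ f x‖ ^ 2 / f x) = ‖fderiv ℝ f x‖ / Real.sqrt (f x) := by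
        rw [Real.sqrt_div (sq_nonneg _), Real.sqrt_sq (norm_nonneg _)]
      have hsrt : Real.sqrt (f x) = f x ^ (1/2 : ℝ) := Real.sqrt_eq_rpow (f x)
      have hsplit : f x ^ (s - 1/2 : ℝ) = f x ^ (s - 1) * f x ^ (1/2 : ℝ) := by
        rw [← Real.rpow_add hfx]; ring_nf
      have hne : f x ^ (1/2 : ℝ) ≠ 0 := ne_of_gt (Real.rpow_pos_of_pos hfx _)
      have heq : f x ^ (s - 1) * ‖fderiv ℝ f x‖ =
          f x ^ (s - 1/2 : ℝ) * Real.sqrt (‖fderiv ℝ f x‖ ^ 2 / f x) := by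
        rw [hsq, hsrt, hsplit]
        field_simp
      have hab : (a * b) x = ENNReal.ofReal
          (f x ^ (s - 1/2 : ℝ) * Real.sqrt (‖fderiv ℝ f x‖ ^ 2 / f x)) := by
        simp only [Pi.mul_apply, ha, hb]
        rw [ENNReal.ofReal_rpow_of_nonneg (h0 x) (by linarith : (0:ℝ) ≤ s - 1/2),
          ← ENNReal.ofReal_mul (Real.rpow_nonneg (h0 x) _)]
      rw [hab, heq]
  have h22 : Real.HolderConjugate 2 2 := Real.holderConjugate_iff.mpr ⟨one_lt_two, by norm_num⟩
  calc ∫⁻ x, ENNReal.ofReal (f x ^ (s - 1) * ‖fderiv ℝ f x‖)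
      ≤ ∫⁻ x, (a * b) x := lintegral_mono pw
    _ ≤ (∫⁻ x, a x ^ (2:ℝ)) ^ (1/2 : ℝ) * (∫⁻ x, b x ^ (2:ℝ)) ^ (1/2 : ℝ) :=
        ENNReal.lintegral_mul_le_Lp_mul_Lq volume h22 hma.aemeasurable hmb.aemeasurable
    _ = Nf f (2 * s - 1) ^ (1/2 : ℝ) *
          ENNReal.ofReal (∫ x, ‖gradient f x‖ ^ 2 / f x) ^ (1/2 : ℝ) := by
        congr 1
        · congr 1
          refine lintegral_congr fun x => ?_
          rw [ha]
          rw [← ENNReal.rpow_mul, show (s - 1/2) * 2 = 2 * s - 1 by ring]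
        · congr 1
          have hbx : ∀ x, b x ^ (2:ℝ) = ENNReal.ofReal (‖fderiv ℝ f x‖ ^ 2 / f x) := by
            intro x
            simp only [hb]
            rw [ENNReal.ofReal_rpow_of_nonneg (Real.sqrt_nonneg _) (by norm_num : (0:ℝ) ≤ 2)]
            congr 1
            rw [Real.rpow_two, Real.sq_sqrt (div_nonneg (sq_nonneg _) (h0 x))]
          rw [lintegral_congr hbx, hgeq,
            ← ofReal_integral_eq_lintegral_ofReal hfish'
              (Filter.Eventually.of_forall fun x => div_nonneg (sq_nonneg _) (h0 x))]

lemma f_integrable {f : E2 → ℝ} (h1 : (∫ x, f x) = 1) : Integrable f := by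
  by_contra hc
  rw [integral_undef hc] at h1
  norm_num at h1

lemma N1_eq {f : E2 → ℝ} (h0 : ∀ x, 0 ≤ f x) (h1 : (∫ x, f x) = 1) : Nf f 1 = 1 := by
  have hint := f_integrable h1
  rw [Nf]
  calc ∫⁻ x, ENNReal.ofReal (f x) ^ (1:ℝ) = ∫⁻ x, ENNReal.ofReal (f x) := by
        exact lintegral_congr fun x => ENNReal.rpow_one _
    _ = ENNReal.ofReal (∫ x, f x) :=
        (ofReal_integral_eq_lintegral_ofReal hint (Filter.Eventually.of_forall h0)).symm
    _ = 1 := by rw [h1]; simp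

lemma coreRec {f : E2 → ℝ} (hd : Differentiable ℝ f) (h0 : ∀ x, 0 ≤ f x)
    (hfish : Integrable (fun x => ‖gradient f x‖ ^ 2 / f x)) {s : ℝ} (hs : 1 ≤ s)
    (hNs : Nf f s ≠ ⊤) (hN1 : Nf f (2 * s - 1) ≠ ⊤) :
    Nf f (2 * s) ≤ ENNReal.ofReal s ^ (2 : ℕ) *
      (Nf f (2 * s - 1) * ENNReal.ofReal (∫ x, ‖gradient f x‖ ^ 2 / f x)) := by
  have hs0 : (0:ℝ) < s := lt_of_lt_of_le one_pos hs
  set Ienn := ENNReal.ofReal (∫ x, ‖gradient f x‖ ^ 2 / f x) with hIenn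
  set g : E2 → ℝ := fun x => f x ^ s with hg
  have hgd : ∀ x, HasFDerivAt g ((s * f x ^ (s - 1)) • fderiv ℝ f x) x := fun x =>
    (Real.hasDerivAt_rpow_const (Or.inr hs)).comp_hasFDerivAt x (hd x).hasFDerivAt
  have hgdiff : Differentiable ℝ g := fun x => (hgd x).differentiableAt
  have hfderivg : ∀ x, fderiv ℝ g x = (s * f x ^ (s - 1)) • fderiv ℝ f x :=
    fun x => (hgd x).fderiv
  have hgnorm : ∀ x, ‖fderiv ℝ g x‖ = s * (f x ^ (s - 1) * ‖fderiv ℝ f x‖) := by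
    intro x
    rw [hfderivg x, norm_smul, Real.norm_eq_abs,
      abs_of_nonneg (mul_nonneg hs0.le (Real.rpow_nonneg (h0 x) _)), mul_assoc]
  have hg0 : ∀ x, 0 ≤ g x := fun x => Real.rpow_nonneg (h0 x) s
  have hgm : Measurable g := hgdiff.continuous.measurable
  have hofg : ∀ x, ENNReal.ofReal (g x) = ENNReal.ofReal (f x) ^ s := fun x =>
    (ENNReal.ofReal_rpow_of_nonneg (h0 x) hs0.le).symm
  have hgint : Integrable g := by
    refine ⟨hgm.aestronglyMeasurable, ?_⟩
    rw [hasFiniteIntegral_iff_ofReal (Filter.Eventually.of_forall hg0)]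
    have heq : ∫⁻ x, ENNReal.ofReal (g x) = Nf f s := by
      rw [Nf]; exact lintegral_congr fun x => hofg x
    rw [heq]
    exact hNs.lt_top
  have hCS := coreCS hd h0 hfish hs
  have hDbound : ∫⁻ x, ENNReal.ofReal ‖fderiv ℝ g x‖ ≤
      ENNReal.ofReal s * (Nf f (2 * s - 1) ^ (1/2 : ℝ) * Ienn ^ (1/2 : ℝ)) := by
    calc ∫⁻ x, ENNReal.ofReal ‖fderiv ℝ g x‖
        = ∫⁻ x, ENNReal.ofReal s * ENNReal.ofReal (f x ^ (s - 1) * ‖fderiv ℝ f x‖) := by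
          refine lintegral_congr fun x => ?_
          rw [hgnorm x, ENNReal.ofReal_mul hs0.le]
      _ = ENNReal.ofReal s * ∫⁻ x, ENNReal.ofReal (f x ^ (s - 1) * ‖fderiv ℝ f x‖) :=
          lintegral_const_mul' _ _ ENNReal.ofReal_ne_top
      _ ≤ ENNReal.ofReal s * (Nf f (2 * s - 1) ^ (1/2 : ℝ) * Ienn ^ (1/2 : ℝ)) := by
          exact mul_le_mul_right hCS _
  have hRHSfin : ENNReal.ofReal s * (Nf f (2 * s - 1) ^ (1/2 : ℝ) * Ienn ^ (1/2 : ℝ)) < ⊤ := by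
    refine ENNReal.mul_lt_top ENNReal.ofReal_lt_top (ENNReal.mul_lt_top ?_ ?_)
    · exact ENNReal.rpow_lt_top_of_nonneg (by norm_num) hN1
    · exact ENNReal.rpow_lt_top_of_nonneg (by norm_num) ENNReal.ofReal_ne_top
  have hDgint : Integrable (fun x => ‖fderiv ℝ g x‖) := by
    refine ⟨(measurable_fderiv ℝ g).norm.aestronglyMeasurable, ?_⟩
    rw [hasFiniteIntegral_iff_ofReal (Filter.Eventually.of_forall fun x => norm_nonneg _)]
    exact lt_of_le_of_lt hDbound hRHSfin
  have hA := claimA hgdiff hg0 hgint hDgint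
  have hleft : ∫⁻ x, ENNReal.ofReal (g x) ^ (2 : ℕ) = Nf f (2 * s) := by
    rw [Nf]
    refine lintegral_congr fun x => ?_
    rw [hofg x, ← ENNReal.rpow_natCast (ENNReal.ofReal (f x) ^ s) 2, ← ENNReal.rpow_mul]
    norm_num [mul_comm]
  calc Nf f (2 * s) = ∫⁻ x, ENNReal.ofReal (g x) ^ (2 : ℕ) := hleft.symm
    _ ≤ (∫⁻ x, ENNReal.ofReal ‖fderiv ℝ g x‖) ^ (2 : ℕ) := hA
    _ ≤ (ENNReal.ofReal s * (Nf f (2 * s - 1) ^ (1/2 : ℝ) * Ienn ^ (1/2 : ℝ))) ^ (2 : ℕ) :=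
        pow_le_pow_left₀ zero_le hDbound 2
    _ = ENNReal.ofReal s ^ (2 : ℕ) * (Nf f (2 * s - 1) * Ienn) := by
        rw [mul_pow, mul_pow]
        congr 1
        congr 1
        · rw [← ENNReal.rpow_natCast (Nf f (2 * s - 1) ^ (1/2:ℝ)) 2, ← ENNReal.rpow_mul]
          norm_num
        · rw [← ENNReal.rpow_natCast (Ienn ^ (1/2:ℝ)) 2, ← ENNReal.rpow_mul]
          norm_num

lemma N2_le {f : E2 → ℝ} (hd : Differentiable ℝ f) (h0 : ∀ x, 0 ≤ f x)
    (h1 : (∫ x, f x) = 1)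
    (hfish : Integrable (fun x => ‖gradient f x‖ ^ 2 / f x)) :
    Nf f 2 ≤ ENNReal.ofReal (∫ x, ‖gradient f x‖ ^ 2 / f x) := by
  have hN1' : Nf f (2 * 1 - 1) = 1 := by norm_num [N1_eq h0 h1]
  have hNs' : Nf f 1 = 1 := N1_eq h0 h1
  have h := coreRec hd h0 hfish (le_refl (1:ℝ))
    (by rw [hNs']; exact ENNReal.one_ne_top) (by rw [hN1']; exact ENNReal.one_ne_top)
  rw [hN1'] at h
  have e1 : (2:ℝ) * 1 = 2 := by norm_num
  rw [e1] at h
  simpa using h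

lemma Ienn_ne_zero {f : E2 → ℝ} (hd : Differentiable ℝ f) (h0 : ∀ x, 0 ≤ f x)
    (h1 : (∫ x, f x) = 1)
    (hfish : Integrable (fun x => ‖gradient f x‖ ^ 2 / f x)) :
    ENNReal.ofReal (∫ x, ‖gradient f x‖ ^ 2 / f x) ≠ 0 := by
  intro hI0
  have h2 := N2_le hd h0 h1 hfish
  rw [hI0] at h2
  have hN2 : Nf f 2 = 0 := le_antisymm h2 zero_le
  have hmf : Measurable f := hd.continuous.measurable
  have hae : (fun x => ENNReal.ofReal (f x) ^ (2:ℝ)) =ᵐ[volume] 0 :=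
    (lintegral_eq_zero_iff'
      (((ENNReal.measurable_ofReal.comp hmf).pow_const _).aemeasurable)).mp hN2
  have hf0 : f =ᵐ[volume] 0 := by
    filter_upwards [hae] with x hx
    simp only [Pi.zero_apply] at hx ⊢
    rcases ENNReal.rpow_eq_zero_iff.mp hx with ⟨h', _⟩ | ⟨h', _⟩
    · have := ENNReal.ofReal_eq_zero.mp h'
      exact le_antisymm this (h0 x)
    · exact absurd h' ENNReal.ofReal_ne_top
  rw [integral_congr_ae hf0] at h1
  simp at h1

lemma interp {f : E2 → ℝ} (hd : Differentiable ℝ f) (h0 : ∀ x, 0 ≤ f x)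
    (h1 : (∫ x, f x) = 1) {r : ℝ} (hr1 : 1 < r) (hr2 : r < 2) :
    Nf f r ≤ Nf f 2 ^ (r - 1) := by
  have hmf : Measurable f := hd.continuous.measurable
  have hmF : Measurable fun x => ENNReal.ofReal (f x) := ENNReal.measurable_ofReal.comp hmf
  have h2r : (0:ℝ) < 2 - r := by linarith
  have hr1' : (0:ℝ) < r - 1 := by linarith
  have hPQ : Real.HolderConjugate (1/(2-r)) (1/(r-1)) := by
    rw [Real.holderConjugate_iff]; constructor
    · rw [lt_div_iff₀ h2r]; linarith
    · simp only [one_div, inv_inv]; ring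
  set u : E2 → ENNReal := fun x => ENNReal.ofReal (f x) ^ (2 - r) with hu
  set v : E2 → ENNReal := fun x => ENNReal.ofReal (f x) ^ (2 * (r - 1)) with hv
  have hpt : ∀ x, ENNReal.ofReal (f x) ^ r = (u * v) x := by
    intro x
    simp only [Pi.mul_apply, hu, hv]
    rw [← ENNReal.rpow_add_of_nonneg _ _ h2r.le (by linarith)]
    congr 1; ring
  have hH := ENNReal.lintegral_mul_le_Lp_mul_Lq (f := u) (g := v) volume hPQ
    ((hmF.pow_const (2 - r)).aemeasurable) ((hmF.pow_const (2 * (r - 1))).aemeasurable)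
  have hulhs : ∫⁻ x, u x ^ (1/(2-r)) = Nf f 1 := by
    rw [Nf]
    refine lintegral_congr fun x => ?_
    simp only [hu]
    rw [← ENNReal.rpow_mul]
    congr 1
    field_simp
  have hvlhs : ∫⁻ x, v x ^ (1/(r-1)) = Nf f 2 := by
    rw [Nf]
    refine lintegral_congr fun x => ?_
    simp only [hv]
    rw [← ENNReal.rpow_mul]
    congr 1
    field_simp
  calc Nf f r = ∫⁻ x, (u * v) x := lintegral_congr hpt
    _ ≤ (∫⁻ x, u x ^ (1/(2-r))) ^ (1/(1/(2-r))) * (∫⁻ x, v x ^ (1/(r-1))) ^ (1/(1/(r-1))) := hH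
    _ = Nf f 1 ^ (2-r) * Nf f 2 ^ (r-1) := by
        rw [hulhs, hvlhs, one_div_one_div, one_div_one_div]
    _ = Nf f 2 ^ (r-1) := by
        rw [N1_eq h0 h1, ENNReal.one_rpow, one_mul]

lemma master (n : ℕ) : ∃ K : ℝ, 1 ≤ K ∧ ∀ f : E2 → ℝ, Differentiable ℝ f →
    (∀ x, 0 ≤ f x) → (∫ x, f x) = 1 →
    Integrable (fun x => ‖gradient f x‖ ^ 2 / f x) →
    ∀ r : ℝ, 1 ≤ r → r ≤ n →
    Nf f r ≤ ENNReal.ofReal K *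
      ENNReal.ofReal (∫ x, ‖gradient f x‖ ^ 2 / f x) ^ (r - 1) := by
  induction n with
  | zero =>
    exact ⟨1, le_refl 1, fun f hd h0 h1 hfish r hr1 hrn =>
      absurd (hr1.trans hrn) (by norm_num)⟩
  | succ n ih =>
    obtain ⟨K, hK1, hK⟩ := ih
    have hn1 : (1:ℝ) ≤ ((n:ℝ) + 1) ^ 2 := by nlinarith [Nat.cast_nonneg (α := ℝ) n]
    have hK'1 : (1:ℝ) ≤ K * ((n:ℝ) + 1) ^ 2 := by nlinarith
    refine ⟨K * ((n:ℝ) + 1) ^ 2, hK'1, ?_⟩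
    intro f hd h0 h1 hfish r hr1 hrn
    push_cast at hrn
    set Ienn := ENNReal.ofReal (∫ x, ‖gradient f x‖ ^ 2 / f x) with hIdef
    have hKK' : ENNReal.ofReal K ≤ ENNReal.ofReal (K * ((n:ℝ) + 1) ^ 2) := by
      refine ENNReal.ofReal_le_ofReal ?_
      nlinarith
    have hKof1 : (1 : ENNReal) ≤ ENNReal.ofReal (K * ((n:ℝ) + 1) ^ 2) :=
      ENNReal.one_le_ofReal.mpr hK'1
    have henlarge : ∀ {X : ENNReal}, X ≤ ENNReal.ofReal K * Ienn ^ (r - 1) →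
        X ≤ ENNReal.ofReal (K * ((n:ℝ) + 1) ^ 2) * Ienn ^ (r - 1) :=
      fun hX => hX.trans (mul_le_mul_left hKK' _)
    by_cases hc : r ≤ n
    · exact henlarge (hK f hd h0 h1 hfish r hr1 hc)
    push_neg at hc
    have hInz : Ienn ≠ 0 := Ienn_ne_zero hd h0 h1 hfish
    have hInt : Ienn ≠ ⊤ := ENNReal.ofReal_ne_top
    rcases eq_or_lt_of_le hr1 with hr1e | hr1s
    · rw [← hr1e, N1_eq h0 h1]
      calc (1 : ENNReal) = 1 * 1 := (one_mul 1).symm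
        _ ≤ ENNReal.ofReal (K * ((n:ℝ) + 1) ^ 2) * Ienn ^ ((1:ℝ) - 1) := by
            refine mul_le_mul' hKof1 ?_
            norm_num
    by_cases hc2 : r ≤ 2
    · have hN2 := N2_le hd h0 h1 hfish
      rcases eq_or_lt_of_le hc2 with hr2e | hr2s
      · subst hr2e
        calc Nf f 2 ≤ Ienn := hN2
          _ = Ienn ^ ((2:ℝ) - 1) := by norm_num
          _ ≤ ENNReal.ofReal (K * ((n:ℝ) + 1) ^ 2) * Ienn ^ ((2:ℝ) - 1) :=
              le_mul_of_one_le_left zero_le hKof1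
      · calc Nf f r ≤ Nf f 2 ^ (r - 1) := interp hd h0 h1 hr1s hr2s
          _ ≤ Ienn ^ (r - 1) := ENNReal.rpow_le_rpow hN2 (by linarith)
          _ ≤ ENNReal.ofReal (K * ((n:ℝ) + 1) ^ 2) * Ienn ^ (r - 1) :=
              le_mul_of_one_le_left zero_le hKof1
    · push_neg at hc2
      have hn2 : (2:ℝ) ≤ (n:ℝ) := by
        have h2n1 : (2:ℝ) < (n:ℝ) + 1 := lt_of_lt_of_le hc2 hrn
        have : (1:ℝ) < (n:ℝ) := by linarith
        have : 1 < n := by exact_mod_cast this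
        exact_mod_cast this
      set s : ℝ := r / 2 with hsdef
      have hs1 : (1:ℝ) ≤ s := by rw [hsdef]; linarith
      have hsn : s ≤ (n:ℝ) := by rw [hsdef]; linarith
      have hNs := hK f hd h0 h1 hfish s hs1 hsn
      have hNr1 := hK f hd h0 h1 hfish (r - 1) (by linarith) (by linarith)
      have hfinaux : ∀ {t : ℝ}, 0 ≤ t - 1 →
          ENNReal.ofReal K * Ienn ^ (t - 1) ≠ ⊤ := fun ht =>
        (ENNReal.mul_lt_top ENNReal.ofReal_lt_top
          (ENNReal.rpow_lt_top_of_nonneg ht hInt)).ne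
      have hNsfin : Nf f s ≠ ⊤ := ne_top_of_le_ne_top (hfinaux (by linarith)) hNs
      have hNr1fin : Nf f (2 * s - 1) ≠ ⊤ := by
        rw [show 2 * s - 1 = r - 1 by rw [hsdef]; ring]
        exact ne_top_of_le_ne_top (hfinaux (by linarith)) hNr1
      have hrec := coreRec hd h0 hfish hs1 hNsfin hNr1fin
      rw [show 2 * s = r by rw [hsdef]; ring] at hrec
      have hNr1' : Nf f (r - 1) ≤ ENNReal.ofReal K * Ienn ^ (r - 2) := by
        rw [show r - 2 = r - 1 - 1 by ring]
        exact hNr1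
      have hIpow : Ienn ^ (r - 2) * Ienn = Ienn ^ (r - 1) := by
        nth_rewrite 2 [← ENNReal.rpow_one Ienn]
        rw [← ENNReal.rpow_add _ _ hInz hInt]
        congr 1
        ring
      have hsK : ENNReal.ofReal s ^ (2:ℕ) * ENNReal.ofReal K ≤
          ENNReal.ofReal (K * ((n:ℝ) + 1) ^ 2) := by
        rw [← ENNReal.ofReal_pow (by linarith : (0:ℝ) ≤ s),
          ← ENNReal.ofReal_mul (by positivity)]
        refine ENNReal.ofReal_le_ofReal ?_
        have hsle : s ≤ (n:ℝ) + 1 := by linarith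
        have : s ^ 2 ≤ ((n:ℝ) + 1) ^ 2 := by nlinarith
        nlinarith
      calc Nf f r ≤ ENNReal.ofReal s ^ (2:ℕ) * (Nf f (r - 1) * Ienn) := hrec
        _ ≤ ENNReal.ofReal s ^ (2:ℕ) * ((ENNReal.ofReal K * Ienn ^ (r - 2)) * Ienn) :=
            mul_le_mul_right (mul_le_mul_left hNr1' _) _
        _ = (ENNReal.ofReal s ^ (2:ℕ) * ENNReal.ofReal K) * Ienn ^ (r - 1) := by
            rw [mul_assoc, hIpow, ← mul_assoc]
        _ ≤ ENNReal.ofReal (K * ((n:ℝ) + 1) ^ 2) * Ienn ^ (r - 1) :=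
            mul_le_mul_left hsK _


/-- Let `f` be a (weakly) differentiable probability density on `ℝ²`
with finite Fisher information `I(f) = ∫ ‖∇f‖²/f`.  Then:
(a) for every `p ∈ [1,∞)` there is a constant `C_p` (independent of `f`) with
`‖f‖_{L^p} ≤ C_p I(f)^{1−1/p}`; (b) for every `q ∈ [1,2)` there is a constant `C_q`
(independent of `f`) with `‖∇f‖_{L^q} ≤ C_q I(f)^{3/2−1/q}`. -/
theorem lp_bounds_by_fisher (p q : ℝ) (hp : 1 ≤ p) (hq : q ∈ Set.Ico (1 : ℝ) 2) :
    ∃ Cp Cq : ℝ, ∀ f : EuclideanSpace ℝ (Fin 2) → ℝ,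
      Differentiable ℝ f → (∀ x, 0 ≤ f x) → (∫ x, f x) = 1 →
      Integrable (fun x => ‖gradient f x‖ ^ 2 / f x) →
      eLpNorm f (ENNReal.ofReal p) volume
          ≤ ENNReal.ofReal (Cp * (∫ x, ‖gradient f x‖ ^ 2 / f x) ^ (1 - 1 / p)) ∧
      eLpNorm (fun x => gradient f x) (ENNReal.ofReal q) volume
          ≤ ENNReal.ofReal (Cq * (∫ x, ‖gradient f x‖ ^ 2 / f x) ^ (3 / 2 - 1 / q)) := by
  obtain ⟨hq1, hq2⟩ := hq
  have hp0 : (0:ℝ) < p := lt_of_lt_of_le one_pos hp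
  have hq0 : (0:ℝ) < q := lt_of_lt_of_le one_pos hq1
  have h2q : (0:ℝ) < 2 - q := by linarith
  set p' : ℝ := q / (2 - q) with hp'def
  have hp'1 : (1:ℝ) ≤ p' := by
    rw [hp'def, le_div_iff₀ h2q]; linarith
  obtain ⟨K, hK1, hK⟩ := master ⌈p⌉₊
  obtain ⟨K', hK'1, hK'⟩ := master ⌈p'⌉₊
  refine ⟨K ^ (1/p), K' ^ ((2 - q)/(2*q)), ?_⟩
  intro f hd h0 h1 hfish
  have hmf : Measurable f := hd.continuous.measurable
  have hmD : Measurable fun x => ‖fderiv ℝ f x‖ := (measurable_fderiv ℝ f).norm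
  set If : ℝ := ∫ x, ‖gradient f x‖ ^ 2 / f x with hIfdef
  have hIf0 : 0 ≤ If :=
    integral_nonneg fun x => div_nonneg (sq_nonneg _) (h0 x)
  set Ienn := ENNReal.ofReal If with hIenndef
  constructor
  · -- part (a)
    have hbound := hK f hd h0 h1 hfish p hp (Nat.le_ceil p)
    have he : eLpNorm f (ENNReal.ofReal p) volume = Nf f p ^ (1/p) := by
      rw [eLpNorm_eq_lintegral_rpow_enorm_toReal
        (by simp [ENNReal.ofReal_eq_zero]; linarith) ENNReal.ofReal_ne_top,
        ENNReal.toReal_ofReal hp0.le]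
      congr 1
      rw [Nf]
      refine lintegral_congr fun x => ?_
      rw [Real.enorm_eq_ofReal (h0 x)]
    rw [he]
    calc Nf f p ^ (1/p) ≤ (ENNReal.ofReal K * Ienn ^ (p - 1)) ^ (1/p) :=
          ENNReal.rpow_le_rpow hbound (by positivity)
      _ = ENNReal.ofReal (K ^ (1/p) * If ^ (1 - 1/p)) := by
          rw [ENNReal.mul_rpow_of_nonneg _ _ (by positivity : (0:ℝ) ≤ 1/p),
            ← ENNReal.rpow_mul,
            show (p - 1) * (1/p) = 1 - 1/p by field_simp,
            ENNReal.ofReal_rpow_of_nonneg (by linarith : (0:ℝ) ≤ K) (by positivity : (0:ℝ) ≤ 1/p),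
            hIenndef,
            ENNReal.ofReal_rpow_of_nonneg hIf0 (by rw [sub_nonneg, div_le_one hp0]; linarith),
            ← ENNReal.ofReal_mul (by positivity)]
  · -- part (b)
    have hgeq : ∀ x, ‖gradient f x‖ = ‖fderiv ℝ f x‖ := grad_norm f
    have hfish' : Integrable (fun x => ‖fderiv ℝ f x‖ ^ 2 / f x) := by
      have : (fun x => ‖gradient f x‖ ^ 2 / f x) = fun x => ‖fderiv ℝ f x‖ ^ 2 / f x := by
        funext x; simp only [hgeq x]
      exact this ▸ hfish
    have hIeq : ∫⁻ x, ENNReal.ofReal (‖fderiv ℝ f x‖ ^ 2 / f x) = Ienn := by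
      rw [hIenndef, hIfdef]
      rw [show (∫ x, ‖gradient f x‖ ^ 2 / f x) = ∫ x, ‖fderiv ℝ f x‖ ^ 2 / f x from
        integral_congr_ae (Filter.Eventually.of_forall fun x => by simp only [hgeq])]
      exact (ofReal_integral_eq_lintegral_ofReal hfish'
        (Filter.Eventually.of_forall fun x => div_nonneg (sq_nonneg _) (h0 x))).symm
    -- Hölder split
    set u : E2 → ENNReal := fun x => ENNReal.ofReal (f x) ^ (q/2) with hu
    set v : E2 → ENNReal := fun x => ENNReal.ofReal (‖fderiv ℝ f x‖ ^ 2 / f x) ^ (q/2) with hv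
    have hmu : Measurable u := (ENNReal.measurable_ofReal.comp hmf).pow_const _
    have hmv : Measurable v :=
      (ENNReal.measurable_ofReal.comp ((hmD.pow_const 2).div hmf)).pow_const _
    have hpw : ∀ x, ENNReal.ofReal ‖fderiv ℝ f x‖ ^ q = (u * v) x := by
      intro x
      simp only [Pi.mul_apply, hu, hv]
      rcases eq_or_lt_of_le (h0 x) with hfx | hfx
      · have hD0 : fderiv ℝ f x = 0 := fderiv_zero_of_min h0 hfx.symm
        rw [← hfx, hD0]
        simp [ENNReal.zero_rpow_of_pos hq0,
          ENNReal.zero_rpow_of_pos (show (0:ℝ) < q/2 by positivity)]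
      · rw [← ENNReal.mul_rpow_of_nonneg _ _ (by positivity : (0:ℝ) ≤ q/2),
          ← ENNReal.ofReal_mul (h0 x),
          show f x * (‖fderiv ℝ f x‖ ^ 2 / f x) = ‖fderiv ℝ f x‖ ^ 2 by
            field_simp,
          ENNReal.ofReal_pow (norm_nonneg _),
          ← ENNReal.rpow_natCast (ENNReal.ofReal ‖fderiv ℝ f x‖) 2,
          ← ENNReal.rpow_mul,
          show (2:ℕ) * (q/2) = q by push_cast; ring]
    have hPQ : Real.HolderConjugate (2/(2-q)) (2/q) := by
      rw [Real.holderConjugate_iff]; constructor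
      · rw [lt_div_iff₀ h2q]; linarith
      · rw [inv_div, inv_div]; ring
    have hH := ENNReal.lintegral_mul_le_Lp_mul_Lq (f := u) (g := v) volume hPQ
      hmu.aemeasurable hmv.aemeasurable
    have huP : ∫⁻ x, u x ^ (2/(2-q)) = Nf f p' := by
      rw [Nf]
      refine lintegral_congr fun x => ?_
      simp only [hu]
      rw [← ENNReal.rpow_mul]
      congr 1
      rw [hp'def]
      field_simp
    have hvQ : ∫⁻ x, v x ^ (2/q) = Ienn := by
      rw [← hIeq]
      refine lintegral_congr fun x => ?_
      simp only [hv]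
      rw [← ENNReal.rpow_mul, show (q/2) * (2/q) = 1 by field_simp, ENNReal.rpow_one]
    have hbound := hK' f hd h0 h1 hfish p' hp'1 (Nat.le_ceil p')
    have he : eLpNorm (fun x => gradient f x) (ENNReal.ofReal q) volume =
        (∫⁻ x, ENNReal.ofReal ‖fderiv ℝ f x‖ ^ q) ^ (1/q) := by
      rw [eLpNorm_eq_lintegral_rpow_enorm_toReal
        (by simp [ENNReal.ofReal_eq_zero]; linarith) ENNReal.ofReal_ne_top,
        ENNReal.toReal_ofReal hq0.le]
      congr 1
      refine lintegral_congr fun x => ?_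
      rw [← ofReal_norm_eq_enorm, hgeq x]
    rw [he]
    have hmain : (∫⁻ x, ENNReal.ofReal ‖fderiv ℝ f x‖ ^ q) ≤
        ENNReal.ofReal K' ^ ((2-q)/2) * Ienn ^ (3*q/2 - 1) := by
      calc ∫⁻ x, ENNReal.ofReal ‖fderiv ℝ f x‖ ^ q
          = ∫⁻ x, (u * v) x := lintegral_congr hpw
        _ ≤ (∫⁻ x, u x ^ (2/(2-q))) ^ (1/(2/(2-q))) * (∫⁻ x, v x ^ (2/q)) ^ (1/(2/q)) := hH
        _ = Nf f p' ^ ((2-q)/2) * Ienn ^ (q/2) := by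
            rw [huP, hvQ, one_div_div, one_div_div]
        _ ≤ (ENNReal.ofReal K' * Ienn ^ (p' - 1)) ^ ((2-q)/2) * Ienn ^ (q/2) :=
            mul_le_mul_left (ENNReal.rpow_le_rpow hbound (by positivity)) _
        _ = ENNReal.ofReal K' ^ ((2-q)/2) * Ienn ^ (3*q/2 - 1) := by
            rw [ENNReal.mul_rpow_of_nonneg _ _ (by positivity : (0:ℝ) ≤ (2-q)/2),
              ← ENNReal.rpow_mul, mul_assoc,
              ← ENNReal.rpow_add_of_nonneg _ _ (by nlinarith [mul_pos hq0 h2q] : (0:ℝ) ≤ (p' - 1) * ((2-q)/2)) (by positivity : (0:ℝ) ≤ q/2)]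
            congr 2
            rw [hp'def]
            field_simp
            ring
    calc (∫⁻ x, ENNReal.ofReal ‖fderiv ℝ f x‖ ^ q) ^ (1/q)
        ≤ (ENNReal.ofReal K' ^ ((2-q)/2) * Ienn ^ (3*q/2 - 1)) ^ (1/q) :=
          ENNReal.rpow_le_rpow hmain (by positivity)
      _ = ENNReal.ofReal (K' ^ ((2-q)/(2*q)) * If ^ (3/2 - 1/q)) := by
          rw [ENNReal.mul_rpow_of_nonneg _ _ (by positivity : (0:ℝ) ≤ 1/q),
            ← ENNReal.rpow_mul, ← ENNReal.rpow_mul,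
            show (2-q)/2 * (1/q) = (2-q)/(2*q) by field_simp,
            show (3*q/2 - 1) * (1/q) = 3/2 - 1/q by field_simp,
            ENNReal.ofReal_rpow_of_nonneg (by linarith : (0:ℝ) ≤ K') (by positivity : (0:ℝ) ≤ (2-q)/(2*q)),
            hIenndef,
            ENNReal.ofReal_rpow_of_nonneg hIf0 (by rw [sub_nonneg]; rw [div_le_div_iff₀ hq0 (by norm_num : (0:ℝ) < 2)] at *; nlinarith : (0:ℝ) ≤ 3/2 - 1/q),
            ← ENNReal.ofReal_mul (by positivity)]
end
end
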